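/- Let A > 0, C > 0, C₂ > 0, and let β > 0 and β′ > 0. If the positive pair (ξ₁, ξ₂) satisfies the equilibrium system C·A/ξ₁ = G( β·ξ₂·(1/A + 1/(2ξ₁)) ) and ξ₂ = (A/β)·( 1 + C₂ − A/(A + 2ξ₁) ) for the rate β, then the pair (ξ₁, β·ξ₂/β′) satisfies the same system with β replaced by β′. In particular, the unique equilibrium value ξ̄₁ does not depend on β, and β·ξ̄₂ does not depend on β. -/

import Mathlib

/-- The function e(x) = (2/x²)·eˣ − (1 + 2/x + 2/x²). -/
noncomputable def eFun (x : ℝ) : ℝ :=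
  2 / x ^ 2 * Real.exp x - (1 + 2 / x + 2 / x ^ 2)

/-- The function g(x) for a parameter C. -/
noncomputable def gFun (C x : ℝ) : ℝ :=
  (1 / 2) * (-(2 * C - 1 + x * (2 * C + 1)) +
    Real.sqrt ((2 * C - 1 + x * (2 * C + 1)) ^ 2 + 8 * C * (x + 1)))

/-- The composite G = g ∘ e. -/
noncomputable def GFun (C x : ℝ) : ℝ := gFun C (eFun x)

/-- The equilibrium system at claim rate β: reinsurer 1's and reinsurer 2's
first-order conditions. -/
def EqSystem (A C C₂ β ξ₁ ξ₂ : ℝ) : Prop :=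
  C * A / ξ₁ = GFun C (β * ξ₂ * (1 / A + 1 / (2 * ξ₁))) ∧
  ξ₂ = (A / β) * (1 + C₂ - A / (A + 2 * ξ₁))


open Real Set

/-- auxiliary: (x-1)·eˣ + 1 > 0 for x > 0 -/
lemma aux_psi_pos {x : ℝ} (hx : 0 < x) : 0 < (x - 1) * Real.exp x + 1 := by
  have hmono : StrictMonoOn (fun y : ℝ => (y - 1) * Real.exp y + 1) (Ici 0) := by
    apply strictMonoOn_of_deriv_pos (convex_Ici 0)
    · fun_prop
    · intro y hy
      rw [interior_Ici] at hy
      have hd : HasDerivAt (fun y : ℝ => (y - 1) * Real.exp y + 1) (y * Real.exp y) y := by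
        have : HasDerivAt (fun y : ℝ => (y - 1) * Real.exp y + 1)
            (1 * Real.exp y + (y - 1) * Real.exp y) y :=
          (((hasDerivAt_id y).sub_const 1).mul (Real.hasDerivAt_exp y)).add_const 1
        convert this using 1; ring
      rw [hd.deriv]
      have := Real.exp_pos y
      have : (0:ℝ) < y := hy
      positivity
  have := hmono (self_mem_Ici) (le_of_lt hx) hx
  simpa using this

/-- auxiliary: (x-2)·eˣ + x + 2 > 0 for x > 0 -/
lemma aux_phi_pos {x : ℝ} (hx : 0 < x) : 0 < (x - 2) * Real.exp x + x + 2 := by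
  have hmono : StrictMonoOn (fun y : ℝ => (y - 2) * Real.exp y + y + 2) (Ici 0) := by
    apply strictMonoOn_of_deriv_pos (convex_Ici 0)
    · fun_prop
    · intro y hy
      rw [interior_Ici] at hy
      have hd : HasDerivAt (fun y : ℝ => (y - 2) * Real.exp y + y + 2)
          ((y - 1) * Real.exp y + 1) y := by
        have : HasDerivAt (fun y : ℝ => (y - 2) * Real.exp y + y + 2)
            ((1 * Real.exp y + (y - 2) * Real.exp y) + 1) y :=
          ((((hasDerivAt_id y).sub_const 2).mul (Real.hasDerivAt_exp y)).add (hasDerivAt_id y)).add_const 2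
        convert this using 1; ring
      rw [hd.deriv]
      exact aux_psi_pos hy
  have := hmono (self_mem_Ici) (le_of_lt hx) hx
  simp only [Real.exp_zero] at this
  nlinarith [this]

/-- numerator n(x) = 2eˣ - (x² + 2x + 2) is positive for x > 0 -/
lemma aux_n_pos {x : ℝ} (hx : 0 < x) : 0 < 2 * Real.exp x - (x ^ 2 + 2 * x + 2) := by
  have hmono : StrictMonoOn (fun y : ℝ => 2 * Real.exp y - (y ^ 2 + 2 * y + 2)) (Ici 0) := by
    apply strictMonoOn_of_deriv_pos (convex_Ici 0)
    · fun_prop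
    · intro y hy
      rw [interior_Ici] at hy
      have hd : HasDerivAt (fun y : ℝ => 2 * Real.exp y - (y ^ 2 + 2 * y + 2))
          (2 * Real.exp y - (2 * y + 2)) y := by
        have h1 : HasDerivAt (fun y : ℝ => 2 * Real.exp y) (2 * Real.exp y) y :=
          (Real.hasDerivAt_exp y).const_mul 2
        have h2 : HasDerivAt (fun y : ℝ => y ^ 2 + 2 * y + 2) (2 * y + 2) y := by
          have h := ((hasDerivAt_pow 2 y).add ((hasDerivAt_id y).const_mul 2)).add_const (2:ℝ)
          convert h using 2 <;> first | rfl | simp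
        exact h1.sub h2
      rw [hd.deriv]
      have := Real.add_one_lt_exp (ne_of_gt hy)
      nlinarith
  have := hmono (self_mem_Ici) (le_of_lt hx) hx
  simp only [Real.exp_zero] at this
  nlinarith [this]

lemma eFun_eq {x : ℝ} (hx : 0 < x) :
    eFun x = (2 * Real.exp x - (x ^ 2 + 2 * x + 2)) / x ^ 2 := by
  unfold eFun
  field_simp

lemma eFun_pos {x : ℝ} (hx : 0 < x) : 0 < eFun x := by
  rw [eFun_eq hx]
  exact div_pos (aux_n_pos hx) (by positivity)

lemma eFun_strictMono : StrictMonoOn eFun (Ioi 0) := by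
  have h2 : StrictMonoOn (fun x : ℝ => (2 * Real.exp x - (x ^ 2 + 2 * x + 2)) / x ^ 2)
      (Ioi 0) := by
    apply strictMonoOn_of_deriv_pos (convex_Ioi 0)
    · apply ContinuousOn.div
      · fun_prop
      · fun_prop
      · intro x hx
        have : (0:ℝ) < x := hx
        positivity
    · intro x hx
      rw [interior_Ioi] at hx
      have hx0 : (0:ℝ) < x := hx
      have hn : HasDerivAt (fun x : ℝ => 2 * Real.exp x - (x ^ 2 + 2 * x + 2))
          (2 * Real.exp x - (2 * x + 2)) x := by
        have h1 : HasDerivAt (fun x : ℝ => 2 * Real.exp x) (2 * Real.exp x) x :=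
          (Real.hasDerivAt_exp x).const_mul 2
        have h2 : HasDerivAt (fun x : ℝ => x ^ 2 + 2 * x + 2) (2 * x + 2) x := by
          have h := ((hasDerivAt_pow 2 x).add ((hasDerivAt_id x).const_mul 2)).add_const (2:ℝ)
          convert h using 2 <;> first | rfl | simp
        exact h1.sub h2
      have hd2 : HasDerivAt (fun x : ℝ => x ^ 2) (2 * x) x := by
        have h := hasDerivAt_pow 2 x
        convert h using 1 <;> first | rfl | simp
      have hd : HasDerivAt (fun x : ℝ => (2 * Real.exp x - (x ^ 2 + 2 * x + 2)) / x ^ 2)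
          (((2 * Real.exp x - (2 * x + 2)) * x ^ 2 -
            (2 * Real.exp x - (x ^ 2 + 2 * x + 2)) * (2 * x)) / (x ^ 2) ^ 2) x :=
        hn.div hd2 (by positivity)
      rw [hd.deriv]
      apply div_pos
      · have key : (2 * Real.exp x - (2 * x + 2)) * x ^ 2 -
            (2 * Real.exp x - (x ^ 2 + 2 * x + 2)) * (2 * x)
            = x * (2 * ((x - 2) * Real.exp x + x + 2)) := by ring
        rw [key]
        have := aux_phi_pos hx0
        positivity
      · positivity
  intro x hx y hy hxy
  rw [eFun_eq hx, eFun_eq hy]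
  exact h2 hx hy hxy

lemma gFun_facts (C : ℝ) (hC : 0 < C) {x : ℝ} (hx : 0 < x) :
    0 < gFun C x ∧
    gFun C x ^ 2 + (2 * C - 1 + x * (2 * C + 1)) * gFun C x = 2 * C * (x + 1) ∧
    2 * C < (2 * C + 1) * gFun C x := by
  set b : ℝ := 2 * C - 1 + x * (2 * C + 1) with hb
  clear_value b
  have hD : (0:ℝ) ≤ b ^ 2 + 8 * C * (x + 1) := by nlinarith [sq_nonneg b]
  have hDb : b ^ 2 < b ^ 2 + 8 * C * (x + 1) := by nlinarith
  set s : ℝ := Real.sqrt (b ^ 2 + 8 * C * (x + 1)) with hs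
  have hs2 : s ^ 2 = b ^ 2 + 8 * C * (x + 1) := hs ▸ Real.sq_sqrt hD
  have habs : |b| < s := by
    have h1 := Real.sqrt_lt_sqrt (sq_nonneg b) hDb
    rw [Real.sqrt_sq_eq_abs] at h1
    rw [hs]; exact h1
  clear_value s
  have hbs : b < s := lt_of_le_of_lt (le_abs_self b) habs
  have hspos : 0 < s := lt_of_le_of_lt (abs_nonneg b) habs
  have hg : gFun C x = (s - b) / 2 := by rw [gFun, ← hb, ← hs]; ring
  have hgpos : 0 < gFun C x := by rw [hg]; linarith
  have heq : gFun C x ^ 2 + b * gFun C x = 2 * C * (x + 1) := by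
    rw [hg]; nlinarith [hs2]
  refine ⟨hgpos, heq, ?_⟩
  set g : ℝ := gFun C x with hgdef
  have h2gb : 0 < 2 * g + b := by rw [hg]; linarith [hspos]
  by_contra hle
  push_neg at hle
  have hP : 0 ≤ 2 * C - (2 * C + 1) * g := by linarith
  have hQ : 0 < 2 * C + (2 * C + 1) * g + (2 * C + 1) * b := by
    nlinarith [mul_pos (show (0:ℝ) < 2 * C + 1 by linarith) h2gb]
  have hPQ : 0 ≤ (2 * C - (2 * C + 1) * g) * (2 * C + (2 * C + 1) * g + (2 * C + 1) * b) :=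
    mul_nonneg hP (le_of_lt hQ)
  have hid : (2 * C - (2 * C + 1) * g) * (2 * C + (2 * C + 1) * g + (2 * C + 1) * b)
      = (2 * C + 1) ^ 2 * (2 * C * (x + 1) - (g ^ 2 + b * g)) - 4 * C * (C + 1) := by
    rw [hb]; ring
  rw [heq] at hid
  nlinarith [hid, hPQ, hC, sq_nonneg C]

lemma gFun_strictAnti (C : ℝ) (hC : 0 < C) : StrictAntiOn (gFun C) (Ioi 0) := by
  intro x1 h1 x2 h2 hlt
  obtain ⟨hg1, he1, hc1⟩ := gFun_facts C hC (show (0:ℝ) < x1 from h1)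
  obtain ⟨hg2, he2, _⟩ := gFun_facts C hC (show (0:ℝ) < x2 from h2)
  set y1 : ℝ := gFun C x1
  set y2 : ℝ := gFun C x2
  by_contra hge
  push_neg at hge
  -- y2 ≥ y1
  have hx1 : (0:ℝ) < x1 := h1
  have hx2 : (0:ℝ) < x2 := h2
  have hb2 : 0 < y2 + (2 * C - 1 + x2 * (2 * C + 1)) := by
    by_contra hnot
    push_neg at hnot
    have hm : y2 * (y2 + (2 * C - 1 + x2 * (2 * C + 1))) ≤ 0 :=
      mul_nonpos_of_nonneg_of_nonpos hg2.le hnot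
    nlinarith [hm, he2, mul_pos hC hx2]
  have key : (y2 - y1) * (y1 + y2 + (2 * C - 1 + x2 * (2 * C + 1)))
      = (x2 - x1) * (2 * C - (2 * C + 1) * y1) := by linear_combination he2 - he1
  have hL : 0 ≤ (y2 - y1) * (y1 + y2 + (2 * C - 1 + x2 * (2 * C + 1))) :=
    mul_nonneg (by linarith) (by linarith)
  have hR : (x2 - x1) * (2 * C - (2 * C + 1) * y1) < 0 :=
    mul_neg_of_pos_of_neg (by linarith) (by linarith)
  linarith [key, hL, hR]

/-- G = g ∘ e is strictly decreasing on positive arguments. -/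
lemma GFun_anti (C : ℝ) (hC : 0 < C) {x y : ℝ} (hx : 0 < x) (hxy : x < y) :
    GFun C y < GFun C x := by
  have hy : 0 < y := lt_trans hx hxy
  have he : eFun x < eFun y := eFun_strictMono hx hy hxy
  exact gFun_strictAnti C hC (eFun_pos hx) (eFun_pos hy) he

/-- Any positive solution of the system satisfies the β-free reduced equation
in s = A/(2ξ₁). -/
lemma reduced_eq (A C C₂ γ η₁ η₂ : ℝ) (hA : 0 < A) (hγ : 0 < γ) (hη₁ : 0 < η₁)
    (h : EqSystem A C C₂ γ η₁ η₂) :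
    2 * C * (A / (2 * η₁)) = GFun C (1 + C₂ + C₂ * (A / (2 * η₁))) := by
  obtain ⟨h1, h2⟩ := h
  have hd : A + 2 * η₁ > 0 := by linarith
  have harg : γ * η₂ * (1 / A + 1 / (2 * η₁)) = 1 + C₂ + C₂ * (A / (2 * η₁)) := by
    rw [h2]; field_simp; ring
  have hlhs : C * A / η₁ = 2 * C * (A / (2 * η₁)) := by field_simp
  rw [← harg, ← hlhs]
  exact h1

/-- If (ξ₁, ξ₂) solves the equilibrium system at rate β, then
(ξ₁, β·ξ₂/β′) solves it at rate β′. In particular, the equilibrium ξ₁ does not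
depend on β and β·ξ₂ does not depend on β. -/
theorem stmt_15 (A C C₂ β β' ξ₁ ξ₂ : ℝ) (hA : 0 < A) (hC : 0 < C) (hC₂ : 0 < C₂)
    (hβ : 0 < β) (hβ' : 0 < β') (hξ₁ : 0 < ξ₁) (hξ₂ : 0 < ξ₂)
    (h : EqSystem A C C₂ β ξ₁ ξ₂) :
    EqSystem A C C₂ β' ξ₁ (β * ξ₂ / β') ∧
    (∀ ξ₁' ξ₂' : ℝ, 0 < ξ₁' → 0 < ξ₂' → EqSystem A C C₂ β' ξ₁' ξ₂' →
      ξ₁' = ξ₁ ∧ β' * ξ₂' = β * ξ₂) := by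
  obtain ⟨h1, h2⟩ := h
  have hd : A + 2 * ξ₁ > 0 := by linarith
  have htrans : EqSystem A C C₂ β' ξ₁ (β * ξ₂ / β') := by
    constructor
    · have harg : β' * (β * ξ₂ / β') * (1 / A + 1 / (2 * ξ₁))
          = β * ξ₂ * (1 / A + 1 / (2 * ξ₁)) := by
        field_simp
      rw [harg]; exact h1
    · rw [h2]; field_simp
  refine ⟨htrans, fun ξ₁' ξ₂' hξ₁' hξ₂' h' => ?_⟩
  obtain ⟨h1', h2'⟩ := h'
  have hd' : A + 2 * ξ₁' > 0 := by linarith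
  -- reduced equations
  have e1 := reduced_eq A C C₂ β ξ₁ ξ₂ hA hβ hξ₁ ⟨h1, h2⟩
  have e2 := reduced_eq A C C₂ β' ξ₁' ξ₂' hA hβ' hξ₁' ⟨h1', h2'⟩
  set s : ℝ := A / (2 * ξ₁) with hsdef
  set s' : ℝ := A / (2 * ξ₁') with hs'def
  have hs : 0 < s := by rw [hsdef]; positivity
  have hs' : 0 < s' := by rw [hs'def]; positivity
  clear_value s s'
  have hargpos : ∀ t : ℝ, 0 < t → 0 < 1 + C₂ + C₂ * t := by
    intro t ht; nlinarith
  have hss : s = s' := by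
    rcases lt_trichotomy s s' with hlt | heq | hgt
    · exfalso
      have : GFun C (1 + C₂ + C₂ * s') < GFun C (1 + C₂ + C₂ * s) :=
        GFun_anti C hC (hargpos s hs) (by nlinarith)
      nlinarith [e1, e2, this]
    · exact heq
    · exfalso
      have : GFun C (1 + C₂ + C₂ * s) < GFun C (1 + C₂ + C₂ * s') :=
        GFun_anti C hC (hargpos s' hs') (by nlinarith)
      nlinarith [e1, e2, this]
  have hx : ξ₁' = ξ₁ := by
    have heq2 : A / (2 * ξ₁) = A / (2 * ξ₁') := by rw [← hsdef, ← hs'def]; exact hss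
    field_simp at heq2
    exact heq2
  refine ⟨hx, ?_⟩
  have hb2 : β' * ξ₂' = A * (1 + C₂ - A / (A + 2 * ξ₁')) := by
    rw [h2']; field_simp
  have hb1 : β * ξ₂ = A * (1 + C₂ - A / (A + 2 * ξ₁)) := by
    rw [h2]; field_simp
  rw [hb2, hb1, hx]
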